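/- (Spherical–planar angle comparison.) Let a, b, c be the side lengths of a nondegenerate spherical triangle with a + b + c < 2π, with spherical angles α, β, γ opposite a, b, c respectively, and let α', β', γ' be the angles of the planar triangle with the same side lengths a, b, c. Then α − α' < (β − β') + (γ − γ'). -/

import Mathlib

open Real

/-- The spherical angle opposite the side of length `a` in a spherical triangle with side
lengths `a`, `b`, `c`, given by the spherical law of cosines. -/
noncomputable def sphAngle (a b c : ℝ) : ℝ :=
  Real.arccos ((Real.cos a - Real.cos b * Real.cos c) / (Real.sin b * Real.sin c))

/-- The angle opposite the side of length `a` in a planar triangle with side lengths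
`a`, `b`, `c`, given by the planar law of cosines. -/
noncomputable def planarAngle (a b c : ℝ) : ℝ :=
  Real.arccos ((b ^ 2 + c ^ 2 - a ^ 2) / (2 * b * c))

lemma not_odd_mul {x : ℝ} (h0 : 0 < x) (h1 : x < π/2) : ∀ k : ℤ, x ≠ (2*k+1)*π/2 := by
  intro k hk
  have hπ := Real.pi_pos
  rcases le_or_gt 0 k with h | h
  · have h' : (0:ℝ) ≤ (k:ℝ) := by exact_mod_cast h
    nlinarith
  · have h' : (k:ℝ) ≤ -1 := by exact_mod_cast (by omega : k ≤ -1)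
    nlinarith

lemma tanF {r : ℝ} (h0 : 0 < r) (h1 : r < π/2) : Real.tan r - r ≤ r^2 * Real.tan r := by
  have hπ := Real.pi_pos
  have hc : 0 < Real.cos r := Real.cos_pos_of_mem_Ioo ⟨by linarith, h1⟩
  have hs : 0 ≤ Real.sin r := Real.sin_nonneg_of_nonneg_of_le_pi h0.le (by linarith)
  have key : Real.sin r - r * Real.cos r ≤ r^2 * Real.sin r := by
    rcases le_or_gt 1 r with h | h
    · nlinarith [mul_nonneg h0.le hc.le, mul_le_mul_of_nonneg_right (show (1:ℝ) ≤ r^2 by nlinarith) hs]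
    · have hslt : Real.sin r < r := Real.sin_lt h0
      have hcos : 1 - r^2/2 ≤ Real.cos r := Real.one_sub_sq_div_two_le_cos
      nlinarith [mul_lt_mul_of_pos_right hslt (show (0:ℝ) < 1 - r^2 by nlinarith),
        mul_le_mul_of_nonneg_left hcos h0.le]
  rw [Real.tan_eq_sin_div_cos, ← sub_nonneg]
  have hrw : r^2 * (Real.sin r/Real.cos r) - (Real.sin r/Real.cos r - r)
      = (r^2 * Real.sin r - (Real.sin r - r * Real.cos r))/Real.cos r := by
    field_simp
  rw [hrw]
  exact div_nonneg (by linarith) hc.le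

lemma tan_superadd {p q : ℝ} (hp : 0 < p) (hq : 0 < q) (hpq : p + q < π/2) :
    (p+q) * Real.tan p * Real.tan q ≤ Real.tan (p+q) * (p*q) := by
  have hπ := Real.pi_pos
  have hp2 : p < π/2 := by linarith
  have hq2 : q < π/2 := by linarith
  have htp : 0 < Real.tan p := Real.tan_pos_of_pos_of_lt_pi_div_two hp hp2
  have htq : 0 < Real.tan q := Real.tan_pos_of_pos_of_lt_pi_div_two hq hq2
  have hlt : Real.tan p * Real.tan q < 1 := by
    have h1 : Real.tan q < Real.tan (π/2 - p) := by
      apply Real.strictMonoOn_tan ⟨by linarith, hq2⟩ ⟨by linarith, by linarith⟩ (by linarith)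
    rw [Real.tan_pi_div_two_sub] at h1
    calc Real.tan p * Real.tan q < Real.tan p * (Real.tan p)⁻¹ :=
          mul_lt_mul_of_pos_left h1 htp
      _ = 1 := mul_inv_cancel₀ htp.ne'
  have hadd : Real.tan (p+q) = (Real.tan p + Real.tan q)/(1 - Real.tan p * Real.tan q) :=
    Real.tan_add' ⟨not_odd_mul hp hp2, not_odd_mul hq hq2⟩
  have hFp : Real.tan p - p ≤ p^2 * Real.tan p := tanF hp hp2
  have hFq : Real.tan q - q ≤ q^2 * Real.tan q := tanF hq hq2
  have hple : p ≤ Real.tan p := (Real.lt_tan hp hp2).le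
  have hqle : q ≤ Real.tan q := (Real.lt_tan hq hq2).le
  rw [hadd, div_mul_eq_mul_div, le_div_iff₀ (by linarith)]
  have t1 : (Real.tan p - p) * (q * Real.tan q) ≤ (p^2 * Real.tan p) * (q * Real.tan q) :=
    mul_le_mul_of_nonneg_right hFp (by positivity)
  have t2 : (Real.tan q - q) * (p * Real.tan p) ≤ (q^2 * Real.tan q) * (p * Real.tan p) :=
    mul_le_mul_of_nonneg_right hFq (by positivity)
  have t3 : p * q ≤ Real.tan p * Real.tan q :=
    mul_le_mul hple hqle hq.le htp.le
  have t4 : (p*q) * (Real.tan p * Real.tan q * (p+q)) ≤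
      (Real.tan p * Real.tan q) * (Real.tan p * Real.tan q * (p+q)) :=
    mul_le_mul_of_nonneg_right t3 (by positivity)
  nlinarith [t1, t2, t4]

lemma final_trig {u v w : ℝ} (hu : 0 < u) (hv : 0 < v) (hw : 0 < w) (hS : u+v+w < π/2) :
    (u+v+w)*w*Real.cos (u+v+w)*Real.cos w*Real.sin u*Real.sin v
      < u*v*Real.sin (u+v+w)*Real.sin w*Real.cos u*Real.cos v := by
  have hπ := Real.pi_pos
  have hcu : 0 < Real.cos u := Real.cos_pos_of_mem_Ioo ⟨by linarith, by linarith⟩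
  have hcv : 0 < Real.cos v := Real.cos_pos_of_mem_Ioo ⟨by linarith, by linarith⟩
  have hcw : 0 < Real.cos w := Real.cos_pos_of_mem_Ioo ⟨by linarith, by linarith⟩
  have hcS : 0 < Real.cos (u+v+w) := Real.cos_pos_of_mem_Ioo ⟨by linarith, by linarith⟩
  have htu : 0 < Real.tan u := Real.tan_pos_of_pos_of_lt_pi_div_two hu (by linarith)
  have htv : 0 < Real.tan v := Real.tan_pos_of_pos_of_lt_pi_div_two hv (by linarith)
  have htw : 0 < Real.tan w := Real.tan_pos_of_pos_of_lt_pi_div_two hw (by linarith)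
  have htuv : 0 < Real.tan (u+v) := Real.tan_pos_of_pos_of_lt_pi_div_two (by linarith) (by linarith)
  have htS : 0 < Real.tan (u+v+w) := Real.tan_pos_of_pos_of_lt_pi_div_two (by linarith) (by linarith)
  have k1 : (u+v) * Real.tan u * Real.tan v ≤ Real.tan (u+v) * (u*v) :=
    tan_superadd hu hv (by linarith)
  have k2 : ((u+v)+w) * Real.tan (u+v) * Real.tan w ≤ Real.tan ((u+v)+w) * ((u+v)*w) :=
    tan_superadd (by linarith) hw (by linarith)
  have hwt : w < Real.tan w := Real.lt_tan hw (by linarith)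
  have goal' : (u+v+w)*w*Real.tan u*Real.tan v < u*v*Real.tan (u+v+w)*Real.tan w := by
    have m1 : (((u+v)+w) * Real.tan (u+v) * Real.tan w) * (u*v*Real.tan w)
        ≤ (Real.tan ((u+v)+w) * ((u+v)*w)) * (u*v*Real.tan w) :=
      mul_le_mul_of_nonneg_right k2 (by positivity)
    have m2 : ((u+v) * Real.tan u * Real.tan v) * ((u+v+w)*Real.tan w*Real.tan w)
        ≤ (Real.tan (u+v) * (u*v)) * ((u+v+w)*Real.tan w*Real.tan w) :=
      mul_le_mul_of_nonneg_right k1 (by positivity)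
    have m3 : w*w < Real.tan w * Real.tan w := by nlinarith
    have key : ((u+v+w)*w*Real.tan u*Real.tan v) * ((u+v)*w)
        < (u*v*Real.tan (u+v+w)*Real.tan w) * ((u+v)*w) := by
      nlinarith [m1, m2, mul_lt_mul_of_pos_left m3
        (show (0:ℝ) < (u+v+w)*Real.tan u*Real.tan v*(u+v) by positivity)]
    exact lt_of_mul_lt_mul_right key (by positivity)
  have e : ∀ x : ℝ, Real.cos x ≠ 0 → Real.tan x * Real.cos x = Real.sin x := by
    intro x hx; rw [Real.tan_eq_sin_div_cos]; field_simp
  rw [← e u hcu.ne', ← e v hcv.ne', ← e w hcw.ne', ← e (u+v+w) hcS.ne']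
  nlinarith [mul_lt_mul_of_pos_right goal'
    (show (0:ℝ) < Real.cos (u+v+w)*Real.cos w*Real.cos u*Real.cos v by positivity)]

lemma E1 (u v w : ℝ) :
    Real.sin (2*(u+v)) * Real.sin (2*(v+w)) * Real.sin (2*(u+w))
      - (Real.sin (2*(u+v+w)) * Real.sin (2*w) * Real.sin (2*u)
        + Real.sin (2*(u+v+w)) * Real.sin (2*w) * Real.sin (2*v)
        - Real.sin (2*(u+v+w)) * Real.sin (2*u) * Real.sin (2*v)
        + Real.sin (2*w) * Real.sin (2*u) * Real.sin (2*v))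
    = 16 * Real.sin (u+v) * Real.cos (v+w) * Real.cos (u+w) * Real.cos (u+v+w)
        * Real.cos w * Real.sin u * Real.sin v := by
  simp only [show ∀ x:ℝ, 2*x = x + x from fun x => (two_mul x), Real.sin_add, Real.cos_add]
  linear_combination (8*(Real.cos u)^2*(Real.sin v)*(Real.cos v)^3*(Real.sin w)^2*(Real.cos w)^2 + 8*(Real.cos u)^2*(Real.sin v)^2*(Real.cos v)^2*(Real.sin w)*(Real.cos w)^3 - 8*(Real.cos u)^2*(Real.sin v)^2*(Real.cos v)^2*(Real.sin w)^3*(Real.cos w) - 8*(Real.cos u)^2*(Real.sin v)^3*(Real.cos v)*(Real.sin w)^2*(Real.cos w)^2 - 8*(Real.sin u)*(Real.cos u)*(Real.cos v)^2*(Real.sin w)^2*(Real.cos w)^2 + 8*(Real.sin u)*(Real.cos u)*(Real.cos v)^4*(Real.sin w)^2*(Real.cos w)^2 - 8*(Real.sin u)*(Real.cos u)*(Real.sin v)*(Real.cos v)*(Real.sin w)*(Real.cos w)^3 + 8*(Real.sin u)*(Real.cos u)*(Real.sin v)*(Real.cos v)*(Real.sin w)^3*(Real.cos w) + 8*(Real.sin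 u)*(Real.cos u)*(Real.sin v)*(Real.cos v)^3*(Real.sin w)*(Real.cos w) + 16*(Real.sin u)*(Real.cos u)*(Real.sin v)*(Real.cos v)^3*(Real.sin w)*(Real.cos w)^3 - 16*(Real.sin u)*(Real.cos u)*(Real.sin v)*(Real.cos v)^3*(Real.sin w)^3*(Real.cos w) + 8*(Real.sin u)*(Real.cos u)*(Real.sin v)^2*(Real.sin w)^2*(Real.cos w)^2 + 8*(Real.sin u)*(Real.cos u)*(Real.sin v)^2*(Real.cos v)^2*(Real.cos w)^2 - 8*(Real.sin u)*(Real.cos u)*(Real.sin v)^2*(Real.cos v)^2*(Real.cos w)^4 - 8*(Real.sin u)*(Real.cos u)*(Real.sin v)^2*(Real.cos v)^2*(Real.sin w)^2 - 32*(Real.sin u)*(Real.cos u)*(Real.sin v)^2*(Real.cos v)^2*(Real.sin w)^2*(Real.cos w)^2 + 8*(Real.sin u)*(Real.cos u)*(Real.sin v)^2*(Real.cos v)^2*(Real.sin w)^4 - 8*(Real.sin u)*(Real.cos u)*(Real.sin v)^3*(Real.cos v)*(Real.sin w)*(Real.cos w) + 16*(Real.sin u)*(Real.cos u)*(Real.sin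 v)^3*(Real.cos v)*(Real.sin w)*(Real.cos w)^3 + 16*(Real.sin u)*(Real.cos u)*(Real.sin v)^3*(Real.cos v)*(Real.sin w)^3*(Real.cos w) - 8*(Real.sin u)*(Real.cos u)*(Real.sin v)^4*(Real.sin w)^2*(Real.cos w)^2 - 8*(Real.sin u)^2*(Real.cos v)^2*(Real.sin w)*(Real.cos w)^3 + 8*(Real.sin u)^2*(Real.cos v)^2*(Real.sin w)^3*(Real.cos w) + 8*(Real.sin u)^2*(Real.cos v)^4*(Real.sin w)*(Real.cos w)^3 - 8*(Real.sin u)^2*(Real.cos v)^4*(Real.sin w)^3*(Real.cos w) + 32*(Real.sin u)^2*(Real.sin v)*(Real.cos v)*(Real.sin w)^2*(Real.cos w)^2 + 8*(Real.sin u)^2*(Real.sin v)*(Real.cos v)^3*(Real.cos w)^2 - 8*(Real.sin u)^2*(Real.sin v)*(Real.cos v)^3*(Real.cos w)^4 - 8*(Real.sin u)^2*(Real.sin v)*(Real.cos v)^3*(Real.sin w)^2 - 40*(Real.sin u)^2*(Real.sin v)*(Real.cos v)^3*(Real.sin w)^2*(Real.cos w)^2 + 8*(Real.sin u)^2*(Real.sin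 v)*(Real.cos v)^3*(Real.sin w)^4 + 8*(Real.sin u)^2*(Real.sin v)^2*(Real.sin w)*(Real.cos w)^3 - 8*(Real.sin u)^2*(Real.sin v)^2*(Real.sin w)^3*(Real.cos w) - 32*(Real.sin u)^2*(Real.sin v)^2*(Real.cos v)^2*(Real.sin w)*(Real.cos w) + 24*(Real.sin u)^2*(Real.sin v)^2*(Real.cos v)^2*(Real.sin w)*(Real.cos w)^3 + 40*(Real.sin u)^2*(Real.sin v)^2*(Real.cos v)^2*(Real.sin w)^3*(Real.cos w) - 8*(Real.sin u)^2*(Real.sin v)^3*(Real.cos v)*(Real.cos w)^2 + 8*(Real.sin u)^2*(Real.sin v)^3*(Real.cos v)*(Real.cos w)^4 + 8*(Real.sin u)^2*(Real.sin v)^3*(Real.cos v)*(Real.sin w)^2 - 24*(Real.sin u)^2*(Real.sin v)^3*(Real.cos v)*(Real.sin w)^2*(Real.cos w)^2 - 8*(Real.sin u)^2*(Real.sin v)^3*(Real.cos v)*(Real.sin w)^4 - 8*(Real.sin u)^2*(Real.sin v)^4*(Real.sin w)*(Real.cos w)^3 + 8*(Real.sin u)^2*(Real.sin v)^4*(Real.sin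 w)^3*(Real.cos w)) * (Real.sin_sq_add_cos_sq u) + (8*(Real.sin u)*(Real.cos u)*(Real.cos v)^2*(Real.sin w)^2*(Real.cos w)^2 + 8*(Real.sin u)*(Real.cos u)*(Real.sin v)*(Real.cos v)*(Real.sin w)*(Real.cos w) + 8*(Real.sin u)*(Real.cos u)*(Real.sin v)*(Real.cos v)*(Real.sin w)*(Real.cos w)^3 - 8*(Real.sin u)*(Real.cos u)*(Real.sin v)*(Real.cos v)*(Real.sin w)^3*(Real.cos w) + 8*(Real.sin u)*(Real.cos u)*(Real.sin v)^2*(Real.cos w)^2 - 8*(Real.sin u)*(Real.cos u)*(Real.sin v)^2*(Real.cos w)^4 - 8*(Real.sin u)*(Real.cos u)*(Real.sin v)^2*(Real.sin w)^2 - 8*(Real.sin u)*(Real.cos u)*(Real.sin v)^2*(Real.sin w)^2*(Real.cos w)^2 + 8*(Real.sin u)*(Real.cos u)*(Real.sin v)^2*(Real.sin w)^4 + 8*(Real.sin u)^2*(Real.cos v)^2*(Real.sin w)*(Real.cos w)^3 - 8*(Real.sin u)^2*(Real.cos v)^2*(Real.sin w)^3*(Real.cos w) + 8*(Real.sin u)^2*(Real.sin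 v)*(Real.cos v)*(Real.cos w)^2 - 8*(Real.sin u)^2*(Real.sin v)*(Real.cos v)*(Real.cos w)^4 - 8*(Real.sin u)^2*(Real.sin v)*(Real.cos v)*(Real.sin w)^2 - 32*(Real.sin u)^2*(Real.sin v)*(Real.cos v)*(Real.sin w)^2*(Real.cos w)^2 + 8*(Real.sin u)^2*(Real.sin v)*(Real.cos v)*(Real.sin w)^4 - 32*(Real.sin u)^2*(Real.sin v)^2*(Real.sin w)*(Real.cos w) + 24*(Real.sin u)^2*(Real.sin v)^2*(Real.sin w)*(Real.cos w)^3 + 40*(Real.sin u)^2*(Real.sin v)^2*(Real.sin w)^3*(Real.cos w) - 16*(Real.sin u)^3*(Real.cos u)*(Real.cos v)^2*(Real.sin w)^2*(Real.cos w)^2 - 16*(Real.sin u)^3*(Real.cos u)*(Real.sin v)*(Real.cos v)*(Real.sin w)*(Real.cos w) + 32*(Real.sin u)^3*(Real.cos u)*(Real.sin v)*(Real.cos v)*(Real.sin w)^3*(Real.cos w) - 16*(Real.sin u)^3*(Real.cos u)*(Real.sin v)^2*(Real.cos w)^2 + 16*(Real.sin u)^3*(Real.cos u)*(Real.sin v)^2*(Real.cos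 w)^4 + 16*(Real.sin u)^3*(Real.cos u)*(Real.sin v)^2*(Real.sin w)^2 + 16*(Real.sin u)^3*(Real.cos u)*(Real.sin v)^2*(Real.sin w)^2*(Real.cos w)^2 - 16*(Real.sin u)^3*(Real.cos u)*(Real.sin v)^2*(Real.sin w)^4 - 8*(Real.sin u)^4*(Real.cos v)^2*(Real.sin w)*(Real.cos w)^3 + 8*(Real.sin u)^4*(Real.cos v)^2*(Real.sin w)^3*(Real.cos w) - 8*(Real.sin u)^4*(Real.sin v)*(Real.cos v)*(Real.cos w)^2 + 8*(Real.sin u)^4*(Real.sin v)*(Real.cos v)*(Real.cos w)^4 + 8*(Real.sin u)^4*(Real.sin v)*(Real.cos v)*(Real.sin w)^2 + 32*(Real.sin u)^4*(Real.sin v)*(Real.cos v)*(Real.sin w)^2*(Real.cos w)^2 - 8*(Real.sin u)^4*(Real.sin v)*(Real.cos v)*(Real.sin w)^4 + 32*(Real.sin u)^4*(Real.sin v)^2*(Real.sin w)*(Real.cos w) - 24*(Real.sin u)^4*(Real.sin v)^2*(Real.sin w)*(Real.cos w)^3 - 40*(Real.sin u)^4*(Real.sin v)^2*(Real.sin w)^3*(Real.cos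 w)) * (Real.sin_sq_add_cos_sq v) + (-8*(Real.sin u)*(Real.cos u)*(Real.sin v)^2*(Real.cos w)^2 + 8*(Real.sin u)*(Real.cos u)*(Real.sin v)^2*(Real.sin w)^2 + 16*(Real.sin u)*(Real.cos u)*(Real.sin v)^3*(Real.cos v)*(Real.sin w)*(Real.cos w) + 8*(Real.sin u)*(Real.cos u)*(Real.sin v)^4*(Real.cos w)^2 - 8*(Real.sin u)*(Real.cos u)*(Real.sin v)^4*(Real.sin w)^2 - 8*(Real.sin u)^2*(Real.sin v)*(Real.cos v)*(Real.cos w)^2 + 8*(Real.sin u)^2*(Real.sin v)*(Real.cos v)*(Real.sin w)^2 + 32*(Real.sin u)^2*(Real.sin v)^2*(Real.sin w)*(Real.cos w) + 16*(Real.sin u)^2*(Real.sin v)^3*(Real.cos v)*(Real.cos w)^2 - 16*(Real.sin u)^2*(Real.sin v)^3*(Real.cos v)*(Real.sin w)^2 - 32*(Real.sin u)^2*(Real.sin v)^4*(Real.sin w)*(Real.cos w) + 16*(Real.sin u)^3*(Real.cos u)*(Real.sin v)*(Real.cos v)*(Real.sin w)*(Real.cos w) + 16*(Real.sin u)^3*(Real.cos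 u)*(Real.sin v)^2*(Real.cos w)^2 - 16*(Real.sin u)^3*(Real.cos u)*(Real.sin v)^2*(Real.sin w)^2 - 32*(Real.sin u)^3*(Real.cos u)*(Real.sin v)^3*(Real.cos v)*(Real.sin w)*(Real.cos w) - 16*(Real.sin u)^3*(Real.cos u)*(Real.sin v)^4*(Real.cos w)^2 + 16*(Real.sin u)^3*(Real.cos u)*(Real.sin v)^4*(Real.sin w)^2 + 8*(Real.sin u)^4*(Real.sin v)*(Real.cos v)*(Real.cos w)^2 - 8*(Real.sin u)^4*(Real.sin v)*(Real.cos v)*(Real.sin w)^2 - 32*(Real.sin u)^4*(Real.sin v)^2*(Real.sin w)*(Real.cos w) - 16*(Real.sin u)^4*(Real.sin v)^3*(Real.cos v)*(Real.cos w)^2 + 16*(Real.sin u)^4*(Real.sin v)^3*(Real.cos v)*(Real.sin w)^2 + 32*(Real.sin u)^4*(Real.sin v)^4*(Real.sin w)*(Real.cos w)) * (Real.sin_sq_add_cos_sq w)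

lemma E2 (u v w : ℝ) :
    Real.sin (2*(u+v)) * Real.sin (2*(v+w)) * Real.sin (2*(u+w))
      + (Real.sin (2*(u+v+w)) * Real.sin (2*w) * Real.sin (2*u)
        + Real.sin (2*(u+v+w)) * Real.sin (2*w) * Real.sin (2*v)
        - Real.sin (2*(u+v+w)) * Real.sin (2*u) * Real.sin (2*v)
        + Real.sin (2*w) * Real.sin (2*u) * Real.sin (2*v))
    = 16 * Real.sin (u+v) * Real.cos (v+w) * Real.cos (u+w) * Real.sin (u+v+w)
        * Real.sin w * Real.cos u * Real.cos v := by
  simp only [show ∀ x:ℝ, 2*x = x + x from fun x => (two_mul x), Real.sin_add, Real.cos_add]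
  linear_combination (-8*(Real.cos u)^2*(Real.sin v)*(Real.cos v)^3*(Real.sin w)^2*(Real.cos w)^2 - 8*(Real.cos u)^2*(Real.sin v)^2*(Real.cos v)^2*(Real.sin w)*(Real.cos w)^3 + 8*(Real.cos u)^2*(Real.sin v)^2*(Real.cos v)^2*(Real.sin w)^3*(Real.cos w) + 8*(Real.cos u)^2*(Real.sin v)^3*(Real.cos v)*(Real.sin w)^2*(Real.cos w)^2 + 8*(Real.sin u)*(Real.cos u)*(Real.cos v)^2*(Real.sin w)^2*(Real.cos w)^2 - 8*(Real.sin u)*(Real.cos u)*(Real.cos v)^4*(Real.sin w)^2*(Real.cos w)^2 + 8*(Real.sin u)*(Real.cos u)*(Real.sin v)*(Real.cos v)*(Real.sin w)*(Real.cos w)^3 - 8*(Real.sin u)*(Real.cos u)*(Real.sin v)*(Real.cos v)*(Real.sin w)^3*(Real.cos w) - 8*(Real.sin u)*(Real.cos u)*(Real.sin v)*(Real.cos v)^3*(Real.sin w)*(Real.cos w) - 16*(Real.sin u)*(Real.cos u)*(Real.sin v)*(Real.cos v)^3*(Real.sin w)*(Real.cos w)^3 + 16*(Real.sin u)*(Real.cos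 u)*(Real.sin v)*(Real.cos v)^3*(Real.sin w)^3*(Real.cos w) - 8*(Real.sin u)*(Real.cos u)*(Real.sin v)^2*(Real.sin w)^2*(Real.cos w)^2 - 8*(Real.sin u)*(Real.cos u)*(Real.sin v)^2*(Real.cos v)^2*(Real.cos w)^2 + 8*(Real.sin u)*(Real.cos u)*(Real.sin v)^2*(Real.cos v)^2*(Real.cos w)^4 + 8*(Real.sin u)*(Real.cos u)*(Real.sin v)^2*(Real.cos v)^2*(Real.sin w)^2 + 32*(Real.sin u)*(Real.cos u)*(Real.sin v)^2*(Real.cos v)^2*(Real.sin w)^2*(Real.cos w)^2 - 8*(Real.sin u)*(Real.cos u)*(Real.sin v)^2*(Real.cos v)^2*(Real.sin w)^4 + 8*(Real.sin u)*(Real.cos u)*(Real.sin v)^3*(Real.cos v)*(Real.sin w)*(Real.cos w) - 16*(Real.sin u)*(Real.cos u)*(Real.sin v)^3*(Real.cos v)*(Real.sin w)*(Real.cos w)^3 - 16*(Real.sin u)*(Real.cos u)*(Real.sin v)^3*(Real.cos v)*(Real.sin w)^3*(Real.cos w) + 8*(Real.sin u)*(Real.cos u)*(Real.sin v)^4*(Real.sin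 w)^2*(Real.cos w)^2 + 8*(Real.sin u)^2*(Real.cos v)^2*(Real.sin w)*(Real.cos w)^3 - 8*(Real.sin u)^2*(Real.cos v)^2*(Real.sin w)^3*(Real.cos w) - 8*(Real.sin u)^2*(Real.cos v)^4*(Real.sin w)*(Real.cos w)^3 + 8*(Real.sin u)^2*(Real.cos v)^4*(Real.sin w)^3*(Real.cos w) - 32*(Real.sin u)^2*(Real.sin v)*(Real.cos v)*(Real.sin w)^2*(Real.cos w)^2 - 8*(Real.sin u)^2*(Real.sin v)*(Real.cos v)^3*(Real.cos w)^2 + 8*(Real.sin u)^2*(Real.sin v)*(Real.cos v)^3*(Real.cos w)^4 + 8*(Real.sin u)^2*(Real.sin v)*(Real.cos v)^3*(Real.sin w)^2 + 40*(Real.sin u)^2*(Real.sin v)*(Real.cos v)^3*(Real.sin w)^2*(Real.cos w)^2 - 8*(Real.sin u)^2*(Real.sin v)*(Real.cos v)^3*(Real.sin w)^4 - 8*(Real.sin u)^2*(Real.sin v)^2*(Real.sin w)*(Real.cos w)^3 + 8*(Real.sin u)^2*(Real.sin v)^2*(Real.sin w)^3*(Real.cos w) + 32*(Real.sin u)^2*(Real.sin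 v)^2*(Real.cos v)^2*(Real.sin w)*(Real.cos w) - 24*(Real.sin u)^2*(Real.sin v)^2*(Real.cos v)^2*(Real.sin w)*(Real.cos w)^3 - 40*(Real.sin u)^2*(Real.sin v)^2*(Real.cos v)^2*(Real.sin w)^3*(Real.cos w) + 8*(Real.sin u)^2*(Real.sin v)^3*(Real.cos v)*(Real.cos w)^2 - 8*(Real.sin u)^2*(Real.sin v)^3*(Real.cos v)*(Real.cos w)^4 - 8*(Real.sin u)^2*(Real.sin v)^3*(Real.cos v)*(Real.sin w)^2 + 24*(Real.sin u)^2*(Real.sin v)^3*(Real.cos v)*(Real.sin w)^2*(Real.cos w)^2 + 8*(Real.sin u)^2*(Real.sin v)^3*(Real.cos v)*(Real.sin w)^4 + 8*(Real.sin u)^2*(Real.sin v)^4*(Real.sin w)*(Real.cos w)^3 - 8*(Real.sin u)^2*(Real.sin v)^4*(Real.sin w)^3*(Real.cos w)) * (Real.sin_sq_add_cos_sq u) + (-8*(Real.sin u)*(Real.cos u)*(Real.cos v)^2*(Real.sin w)^2*(Real.cos w)^2 - 8*(Real.sin u)*(Real.cos u)*(Real.sin v)*(Real.cos v)*(Real.sin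 w)*(Real.cos w) - 8*(Real.sin u)*(Real.cos u)*(Real.sin v)*(Real.cos v)*(Real.sin w)*(Real.cos w)^3 + 8*(Real.sin u)*(Real.cos u)*(Real.sin v)*(Real.cos v)*(Real.sin w)^3*(Real.cos w) - 8*(Real.sin u)*(Real.cos u)*(Real.sin v)^2*(Real.cos w)^2 + 8*(Real.sin u)*(Real.cos u)*(Real.sin v)^2*(Real.cos w)^4 + 8*(Real.sin u)*(Real.cos u)*(Real.sin v)^2*(Real.sin w)^2 + 8*(Real.sin u)*(Real.cos u)*(Real.sin v)^2*(Real.sin w)^2*(Real.cos w)^2 - 8*(Real.sin u)*(Real.cos u)*(Real.sin v)^2*(Real.sin w)^4 - 8*(Real.sin u)^2*(Real.cos v)^2*(Real.sin w)*(Real.cos w)^3 + 8*(Real.sin u)^2*(Real.cos v)^2*(Real.sin w)^3*(Real.cos w) - 8*(Real.sin u)^2*(Real.sin v)*(Real.cos v)*(Real.cos w)^2 + 8*(Real.sin u)^2*(Real.sin v)*(Real.cos v)*(Real.cos w)^4 + 8*(Real.sin u)^2*(Real.sin v)*(Real.cos v)*(Real.sin w)^2 + 32*(Real.sin u)^2*(Real.sin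 v)*(Real.cos v)*(Real.sin w)^2*(Real.cos w)^2 - 8*(Real.sin u)^2*(Real.sin v)*(Real.cos v)*(Real.sin w)^4 + 32*(Real.sin u)^2*(Real.sin v)^2*(Real.sin w)*(Real.cos w) - 24*(Real.sin u)^2*(Real.sin v)^2*(Real.sin w)*(Real.cos w)^3 - 40*(Real.sin u)^2*(Real.sin v)^2*(Real.sin w)^3*(Real.cos w) + 16*(Real.sin u)^3*(Real.cos u)*(Real.cos v)^2*(Real.sin w)^2*(Real.cos w)^2 + 16*(Real.sin u)^3*(Real.cos u)*(Real.sin v)*(Real.cos v)*(Real.sin w)*(Real.cos w) - 32*(Real.sin u)^3*(Real.cos u)*(Real.sin v)*(Real.cos v)*(Real.sin w)^3*(Real.cos w) + 16*(Real.sin u)^3*(Real.cos u)*(Real.sin v)^2*(Real.cos w)^2 - 16*(Real.sin u)^3*(Real.cos u)*(Real.sin v)^2*(Real.cos w)^4 - 16*(Real.sin u)^3*(Real.cos u)*(Real.sin v)^2*(Real.sin w)^2 - 16*(Real.sin u)^3*(Real.cos u)*(Real.sin v)^2*(Real.sin w)^2*(Real.cos w)^2 + 16*(Real.sin u)^3*(Real.cos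 u)*(Real.sin v)^2*(Real.sin w)^4 + 8*(Real.sin u)^4*(Real.cos v)^2*(Real.sin w)*(Real.cos w)^3 - 8*(Real.sin u)^4*(Real.cos v)^2*(Real.sin w)^3*(Real.cos w) + 8*(Real.sin u)^4*(Real.sin v)*(Real.cos v)*(Real.cos w)^2 - 8*(Real.sin u)^4*(Real.sin v)*(Real.cos v)*(Real.cos w)^4 - 8*(Real.sin u)^4*(Real.sin v)*(Real.cos v)*(Real.sin w)^2 - 32*(Real.sin u)^4*(Real.sin v)*(Real.cos v)*(Real.sin w)^2*(Real.cos w)^2 + 8*(Real.sin u)^4*(Real.sin v)*(Real.cos v)*(Real.sin w)^4 - 32*(Real.sin u)^4*(Real.sin v)^2*(Real.sin w)*(Real.cos w) + 24*(Real.sin u)^4*(Real.sin v)^2*(Real.sin w)*(Real.cos w)^3 + 40*(Real.sin u)^4*(Real.sin v)^2*(Real.sin w)^3*(Real.cos w)) * (Real.sin_sq_add_cos_sq v) + (8*(Real.sin u)*(Real.cos u)*(Real.sin v)^2*(Real.cos w)^2 - 8*(Real.sin u)*(Real.cos u)*(Real.sin v)^2*(Real.sin w)^2 - 16*(Real.sin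 u)*(Real.cos u)*(Real.sin v)^3*(Real.cos v)*(Real.sin w)*(Real.cos w) - 8*(Real.sin u)*(Real.cos u)*(Real.sin v)^4*(Real.cos w)^2 + 8*(Real.sin u)*(Real.cos u)*(Real.sin v)^4*(Real.sin w)^2 + 8*(Real.sin u)^2*(Real.sin v)*(Real.cos v)*(Real.cos w)^2 - 8*(Real.sin u)^2*(Real.sin v)*(Real.cos v)*(Real.sin w)^2 - 32*(Real.sin u)^2*(Real.sin v)^2*(Real.sin w)*(Real.cos w) - 16*(Real.sin u)^2*(Real.sin v)^3*(Real.cos v)*(Real.cos w)^2 + 16*(Real.sin u)^2*(Real.sin v)^3*(Real.cos v)*(Real.sin w)^2 + 32*(Real.sin u)^2*(Real.sin v)^4*(Real.sin w)*(Real.cos w) - 16*(Real.sin u)^3*(Real.cos u)*(Real.sin v)*(Real.cos v)*(Real.sin w)*(Real.cos w) - 16*(Real.sin u)^3*(Real.cos u)*(Real.sin v)^2*(Real.cos w)^2 + 16*(Real.sin u)^3*(Real.cos u)*(Real.sin v)^2*(Real.sin w)^2 + 32*(Real.sin u)^3*(Real.cos u)*(Real.sin v)^3*(Real.cos v)*(Real.sin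 w)*(Real.cos w) + 16*(Real.sin u)^3*(Real.cos u)*(Real.sin v)^4*(Real.cos w)^2 - 16*(Real.sin u)^3*(Real.cos u)*(Real.sin v)^4*(Real.sin w)^2 - 8*(Real.sin u)^4*(Real.sin v)*(Real.cos v)*(Real.cos w)^2 + 8*(Real.sin u)^4*(Real.sin v)*(Real.cos v)*(Real.sin w)^2 + 32*(Real.sin u)^4*(Real.sin v)^2*(Real.sin w)*(Real.cos w) + 16*(Real.sin u)^4*(Real.sin v)^3*(Real.cos v)*(Real.cos w)^2 - 16*(Real.sin u)^4*(Real.sin v)^3*(Real.cos v)*(Real.sin w)^2 - 32*(Real.sin u)^4*(Real.sin v)^4*(Real.sin w)*(Real.cos w)) * (Real.sin_sq_add_cos_sq w)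


lemma sph_helper {x y z : ℝ} (hx : 0 < x) (hy : 0 < y) (hz : 0 < z) (hS : x+y+z < π/2) :
    0 < sphAngle (2*(x+y)) (2*(y+z)) (2*(x+z)) ∧
    sphAngle (2*(x+y)) (2*(y+z)) (2*(x+z)) < π ∧
    Real.cos (sphAngle (2*(x+y)) (2*(y+z)) (2*(x+z)) / 2) ^ 2
      = Real.sin (2*(x+y+z)) * Real.sin (2*z) / (Real.sin (2*(y+z)) * Real.sin (2*(x+z))) ∧
    Real.sin (sphAngle (2*(x+y)) (2*(y+z)) (2*(x+z)) / 2) ^ 2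
      = Real.sin (2*x) * Real.sin (2*y) / (Real.sin (2*(y+z)) * Real.sin (2*(x+z))) := by
  have hπ := Real.pi_pos
  set Q : ℝ := (Real.cos (2*(x+y)) - Real.cos (2*(y+z)) * Real.cos (2*(x+z)))
      / (Real.sin (2*(y+z)) * Real.sin (2*(x+z))) with hQdef
  have hA : sphAngle (2*(x+y)) (2*(y+z)) (2*(x+z)) = Real.arccos Q := rfl
  have hsB : 0 < Real.sin (2*(y+z)) := Real.sin_pos_of_pos_of_lt_pi (by linarith) (by linarith)
  have hsC : 0 < Real.sin (2*(x+z)) := Real.sin_pos_of_pos_of_lt_pi (by linarith) (by linarith)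
  have hsX : 0 < Real.sin (2*x) := Real.sin_pos_of_pos_of_lt_pi (by linarith) (by linarith)
  have hsY : 0 < Real.sin (2*y) := Real.sin_pos_of_pos_of_lt_pi (by linarith) (by linarith)
  have hsZ : 0 < Real.sin (2*z) := Real.sin_pos_of_pos_of_lt_pi (by linarith) (by linarith)
  have hsS : 0 < Real.sin (2*(x+y+z)) := Real.sin_pos_of_pos_of_lt_pi (by linarith) (by linarith)
  have hden : 0 < Real.sin (2*(y+z)) * Real.sin (2*(x+z)) := mul_pos hsB hsC
  have e1m : Real.sin (2*(y+z)) * Real.sin (2*(x+z))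
      - (Real.cos (2*(x+y)) - Real.cos (2*(y+z)) * Real.cos (2*(x+z)))
      = 2 * Real.sin (2*x) * Real.sin (2*y) := by
    simp only [show (∀ r:ℝ, 2*r = r+r) from fun r => two_mul r, Real.sin_add, Real.cos_add]
    linear_combination (-1*(Real.cos y)^2 + (Real.cos y)^2*(Real.cos z)^4 + 2*(Real.cos y)^2*(Real.sin z)^2*(Real.cos z)^2 + (Real.cos y)^2*(Real.sin z)^4 + (Real.sin y)^2 - 1*(Real.sin y)^2*(Real.cos z)^4 - 2*(Real.sin y)^2*(Real.sin z)^2*(Real.cos z)^2 - 1*(Real.sin y)^2*(Real.sin z)^4) * (Real.sin_sq_add_cos_sq x) + (-1 + (Real.cos z)^4 + 2*(Real.sin z)^2*(Real.cos z)^2 + (Real.sin z)^4 + 2*(Real.sin x)^2 - 2*(Real.sin x)^2*(Real.cos z)^4 - 4*(Real.sin x)^2*(Real.sin z)^2*(Real.cos z)^2 - 2*(Real.sin x)^2*(Real.sin z)^4) * (Real.sin_sq_add_cos_sq y) + (1 + (Real.cos z)^2 + (Real.sin z)^2 - 2*(Real.sin y)^2 - 2*(Real.sin y)^2*(Real.cos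 z)^2 - 2*(Real.sin y)^2*(Real.sin z)^2 + 4*(Real.sin x)*(Real.cos x)*(Real.sin y)*(Real.cos y) + 4*(Real.sin x)*(Real.cos x)*(Real.sin y)*(Real.cos y)*(Real.cos z)^2 + 4*(Real.sin x)*(Real.cos x)*(Real.sin y)*(Real.cos y)*(Real.sin z)^2 - 2*(Real.sin x)^2 - 2*(Real.sin x)^2*(Real.cos z)^2 - 2*(Real.sin x)^2*(Real.sin z)^2 + 4*(Real.sin x)^2*(Real.sin y)^2 + 4*(Real.sin x)^2*(Real.sin y)^2*(Real.cos z)^2 + 4*(Real.sin x)^2*(Real.sin y)^2*(Real.sin z)^2) * (Real.sin_sq_add_cos_sq z)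
  have e1p : Real.sin (2*(y+z)) * Real.sin (2*(x+z))
      + (Real.cos (2*(x+y)) - Real.cos (2*(y+z)) * Real.cos (2*(x+z)))
      = 2 * Real.sin (2*(x+y+z)) * Real.sin (2*z) := by
    simp only [show (∀ r:ℝ, 2*r = r+r) from fun r => two_mul r, Real.sin_add, Real.cos_add]
    linear_combination ((Real.cos y)^2 - 1*(Real.cos y)^2*(Real.cos z)^4 - 2*(Real.cos y)^2*(Real.sin z)^2*(Real.cos z)^2 - 1*(Real.cos y)^2*(Real.sin z)^4 - 1*(Real.sin y)^2 + (Real.sin y)^2*(Real.cos z)^4 + 2*(Real.sin y)^2*(Real.sin z)^2*(Real.cos z)^2 + (Real.sin y)^2*(Real.sin z)^4) * (Real.sin_sq_add_cos_sq x) + (1 - 1*(Real.cos z)^4 - 2*(Real.sin z)^2*(Real.cos z)^2 - 1*(Real.sin z)^4 - 2*(Real.sin x)^2 + 2*(Real.sin x)^2*(Real.cos z)^4 + 4*(Real.sin x)^2*(Real.sin z)^2*(Real.cos z)^2 + 2*(Real.sin x)^2*(Real.sin z)^4) * (Real.sin_sq_add_cos_sq y) + (-1 - 1*(Real.cos z)^2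 - 1*(Real.sin z)^2 + 2*(Real.sin y)^2 + 2*(Real.sin y)^2*(Real.cos z)^2 + 2*(Real.sin y)^2*(Real.sin z)^2 + 4*(Real.sin x)*(Real.cos x)*(Real.sin y)*(Real.cos y) + 4*(Real.sin x)*(Real.cos x)*(Real.sin y)*(Real.cos y)*(Real.cos z)^2 + 4*(Real.sin x)*(Real.cos x)*(Real.sin y)*(Real.cos y)*(Real.sin z)^2 + 2*(Real.sin x)^2 + 2*(Real.sin x)^2*(Real.cos z)^2 + 2*(Real.sin x)^2*(Real.sin z)^2 - 4*(Real.sin x)^2*(Real.sin y)^2 - 4*(Real.sin x)^2*(Real.sin y)^2*(Real.cos z)^2 - 4*(Real.sin x)^2*(Real.sin y)^2*(Real.sin z)^2) * (Real.sin_sq_add_cos_sq z)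
  have hQ1m : 1 - Q = 2 * (Real.sin (2*x) * Real.sin (2*y)
      / (Real.sin (2*(y+z)) * Real.sin (2*(x+z)))) := by
    rw [hQdef]
    field_simp
    linarith [e1m]
  have hQ1p : 1 + Q = 2 * (Real.sin (2*(x+y+z)) * Real.sin (2*z)
      / (Real.sin (2*(y+z)) * Real.sin (2*(x+z)))) := by
    rw [hQdef]
    field_simp
    linarith [e1p]
  have hfrac1 : 0 < Real.sin (2*x) * Real.sin (2*y) / (Real.sin (2*(y+z)) * Real.sin (2*(x+z))) :=
    div_pos (mul_pos hsX hsY) hden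
  have hfrac2 : 0 < Real.sin (2*(x+y+z)) * Real.sin (2*z)
      / (Real.sin (2*(y+z)) * Real.sin (2*(x+z))) := div_pos (mul_pos hsS hsZ) hden
  have hQlt : Q < 1 := by linarith
  have hQgt : -1 < Q := by linarith
  have hcosQ : Real.cos (Real.arccos Q) = Q := Real.cos_arccos hQgt.le hQlt.le
  have h0 : 0 < Real.arccos Q := Real.arccos_pos.mpr hQlt
  have hpi : Real.arccos Q < π := by
    rcases lt_or_eq_of_le (Real.arccos_le_pi Q) with h | h
    · exact h
    · exfalso; rw [h, Real.cos_pi] at hcosQ; linarith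
  have hc2 : Real.cos (Real.arccos Q / 2) ^ 2
      = Real.sin (2*(x+y+z)) * Real.sin (2*z) / (Real.sin (2*(y+z)) * Real.sin (2*(x+z))) := by
    have h := Real.cos_sq (Real.arccos Q / 2)
    rw [show 2*(Real.arccos Q/2) = Real.arccos Q from by ring, hcosQ] at h
    rw [h]; linarith
  have hs2 : Real.sin (Real.arccos Q / 2) ^ 2
      = Real.sin (2*x) * Real.sin (2*y) / (Real.sin (2*(y+z)) * Real.sin (2*(x+z))) := by
    rw [Real.sin_sq, hc2]; linarith
  exact ⟨hA ▸ h0, hA ▸ hpi, hA ▸ hc2, hA ▸ hs2⟩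

set_option maxHeartbeats 2000000 in
lemma planar_angle_sum {a b c : ℝ} (ha : 0 < a) (hb : 0 < b) (hc : 0 < c)
    (habc : a < b + c) (hbca : b < c + a) (hcab : c < a + b) :
    planarAngle a b c + planarAngle b c a + planarAngle c a b = π := by
  have hπ := Real.pi_pos
  set x : ℝ := (b ^ 2 + c ^ 2 - a ^ 2) / (2 * b * c) with hxdef
  set y : ℝ := (c ^ 2 + a ^ 2 - b ^ 2) / (2 * c * a) with hydef
  set z : ℝ := (a ^ 2 + b ^ 2 - c ^ 2) / (2 * a * b) with hzdef
  set H : ℝ := (a+b+c)*(b+c-a)*(a+c-b)*(a+b-c) with hHdef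
  have hH : 0 < H := by
    apply mul_pos (mul_pos (mul_pos (by linarith) (by linarith)) (by linarith)) (by linarith)
  have hx1 : -1 < x := by
    have h : 1 + x = ((a+b+c)*(b+c-a))/(2*b*c) := by rw [hxdef]; field_simp; ring
    nlinarith [div_pos (mul_pos (show (0:ℝ) < a+b+c by linarith) (show (0:ℝ) < b+c-a by linarith)) (show (0:ℝ) < 2*b*c by positivity)]
  have hx2 : x < 1 := by
    have h : 1 - x = ((a+c-b)*(a+b-c))/(2*b*c) := by rw [hxdef]; field_simp; ring
    nlinarith [div_pos (mul_pos (show (0:ℝ) < a+c-b by linarith) (show (0:ℝ) < a+b-c by linarith)) (show (0:ℝ) < 2*b*c by positivity)]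
  have hy1 : -1 < y := by
    have h : 1 + y = ((a+b+c)*(a+c-b))/(2*c*a) := by rw [hydef]; field_simp; ring
    nlinarith [div_pos (mul_pos (show (0:ℝ) < a+b+c by linarith) (show (0:ℝ) < a+c-b by linarith)) (show (0:ℝ) < 2*c*a by positivity)]
  have hy2 : y < 1 := by
    have h : 1 - y = ((a+b-c)*(b+c-a))/(2*c*a) := by rw [hydef]; field_simp; ring
    nlinarith [div_pos (mul_pos (show (0:ℝ) < a+b-c by linarith) (show (0:ℝ) < b+c-a by linarith)) (show (0:ℝ) < 2*c*a by positivity)]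
  have hz1 : -1 < z := by
    have h : 1 + z = ((a+b+c)*(a+b-c))/(2*a*b) := by rw [hzdef]; field_simp; ring
    nlinarith [div_pos (mul_pos (show (0:ℝ) < a+b+c by linarith) (show (0:ℝ) < a+b-c by linarith)) (show (0:ℝ) < 2*a*b by positivity)]
  have hz2 : z < 1 := by
    have h : 1 - z = ((b+c-a)*(a+c-b))/(2*a*b) := by rw [hzdef]; field_simp; ring
    nlinarith [div_pos (mul_pos (show (0:ℝ) < b+c-a by linarith) (show (0:ℝ) < a+c-b by linarith)) (show (0:ℝ) < 2*a*b by positivity)]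
  have hαβγ : planarAngle a b c = Real.arccos x ∧ planarAngle b c a = Real.arccos y ∧
      planarAngle c a b = Real.arccos z := ⟨rfl, rfl, rfl⟩
  obtain ⟨hα, hβ, hγ⟩ := hαβγ
  rw [hα, hβ, hγ]
  have hcx : Real.cos (Real.arccos x) = x := Real.cos_arccos hx1.le hx2.le
  have hcy : Real.cos (Real.arccos y) = y := Real.cos_arccos hy1.le hy2.le
  have hcz : Real.cos (Real.arccos z) = z := Real.cos_arccos hz1.le hz2.le
  -- sin values
  have h1x : 1 - x^2 = H * ((2*b*c)⁻¹)^2 := by rw [hxdef, hHdef]; field_simp; ring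
  have h1y : 1 - y^2 = H * ((2*c*a)⁻¹)^2 := by rw [hydef, hHdef]; field_simp; ring
  have hsx : Real.sin (Real.arccos x) = Real.sqrt H * (2*b*c)⁻¹ := by
    rw [Real.sin_arccos, h1x, Real.sqrt_mul hH.le, Real.sqrt_sq (by positivity)]
  have hsy : Real.sin (Real.arccos y) = Real.sqrt H * (2*c*a)⁻¹ := by
    rw [Real.sin_arccos, h1y, Real.sqrt_mul hH.le, Real.sqrt_sq (by positivity)]
  have hHsq : Real.sqrt H * Real.sqrt H = H := Real.mul_self_sqrt hH.le
  have hsinsum : Real.sin (Real.arccos x + Real.arccos y) = Real.sqrt H * (2*a*b)⁻¹ := by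
    rw [Real.sin_add, hsx, hsy, hcx, hcy, hxdef, hydef]
    field_simp
    ring
  have hcossum : Real.cos (Real.arccos x + Real.arccos y) = -z := by
    rw [Real.cos_add, hsx, hsy, hcx, hcy]
    have : Real.sqrt H * (2*b*c)⁻¹ * (Real.sqrt H * (2*c*a)⁻¹) = H * ((2*b*c)*(2*c*a))⁻¹ := by
      rw [show Real.sqrt H * (2*b*c)⁻¹ * (Real.sqrt H * (2*c*a)⁻¹)
        = (Real.sqrt H * Real.sqrt H) * ((2*b*c)⁻¹*(2*c*a)⁻¹) from by ring, hHsq, ← mul_inv]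
    rw [this, hxdef, hydef, hzdef, hHdef]
    field_simp
    ring
  -- range facts
  have hx0 : 0 < Real.arccos x := Real.arccos_pos.mpr hx2
  have hy0 : 0 < Real.arccos y := Real.arccos_pos.mpr hy2
  have hz0 : 0 < Real.arccos z := Real.arccos_pos.mpr hz2
  have hxpi : Real.arccos x < π := by
    rcases lt_or_eq_of_le (Real.arccos_le_pi x) with h | h
    · exact h
    · exfalso; have := hcx; rw [h, Real.cos_pi] at this; nlinarith
  have hypi : Real.arccos y < π := by
    rcases lt_or_eq_of_le (Real.arccos_le_pi y) with h | h
    · exact h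
    · exfalso; have := hcy; rw [h, Real.cos_pi] at this; nlinarith
  have hsum2 : Real.arccos x + Real.arccos y < π := by
    by_contra hcon
    push_neg at hcon
    have h1 : Real.arccos x + Real.arccos y - π ≤ π := by linarith
    have h2 : 0 ≤ Real.arccos x + Real.arccos y - π := by linarith
    have h3 : 0 ≤ Real.sin (Real.arccos x + Real.arccos y - π) :=
      Real.sin_nonneg_of_nonneg_of_le_pi h2 h1
    rw [Real.sin_sub_pi] at h3
    have h4 : 0 < Real.sin (Real.arccos x + Real.arccos y) := by
      rw [hsinsum]; positivity
    linarith
  -- conclude via injOn_cos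
  have hkey : Real.arccos z = π - (Real.arccos x + Real.arccos y) := by
    apply Real.injOn_cos ⟨hz0.le, Real.arccos_le_pi z⟩ ⟨by linarith, by linarith⟩
    rw [hcz, Real.cos_pi_sub, hcossum]; ring
  linarith

set_option maxHeartbeats 3200000 in
lemma sph_key {u v w : ℝ} (hu : 0 < u) (hv : 0 < v) (hw : 0 < w) (hS : u + v + w < π/2) :
    0 < 1 + Real.sin ((sphAngle (2*(v+w)) (2*(u+w)) (2*(u+v))
        + sphAngle (2*(u+w)) (2*(u+v)) (2*(v+w))
        - sphAngle (2*(u+v)) (2*(v+w)) (2*(u+w))) / 2) ∧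
    ((u+v+w)*w) * (1 - Real.sin ((sphAngle (2*(v+w)) (2*(u+w)) (2*(u+v))
        + sphAngle (2*(u+w)) (2*(u+v)) (2*(v+w))
        - sphAngle (2*(u+v)) (2*(v+w)) (2*(u+w))) / 2))
      < (u*v) * (1 + Real.sin ((sphAngle (2*(v+w)) (2*(u+w)) (2*(u+v))
        + sphAngle (2*(u+w)) (2*(u+v)) (2*(v+w))
        - sphAngle (2*(u+v)) (2*(v+w)) (2*(u+w))) / 2)) := by
  have hπ := Real.pi_pos
  set α := sphAngle (2*(u+v)) (2*(v+w)) (2*(u+w)) with hαdef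
  set β := sphAngle (2*(v+w)) (2*(u+w)) (2*(u+v)) with hβdef
  set γ := sphAngle (2*(u+w)) (2*(u+v)) (2*(v+w)) with hγdef
  have Hα := sph_helper hu hv hw hS
  rw [← hαdef] at Hα
  obtain ⟨hα0, hαπ, hcα2, hsα2⟩ := Hα
  have Hβ := sph_helper hv hw hu (by linarith : v + w + u < π/2)
  rw [show w+u = u+w from by ring, show v+u = u+v from by ring,
    show v+w+u = u+v+w from by ring, ← hβdef] at Hβ
  obtain ⟨hβ0, hβπ, hcβ2, hsβ2⟩ := Hβ
  have Hγ := sph_helper hw hu hv (by linarith : w + u + v < π/2)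
  rw [show w+u = u+w from by ring, show w+v = v+w from by ring,
    show u+w+v = u+v+w from by ring, ← hγdef] at Hγ
  obtain ⟨hγ0, hγπ, hcγ2, hsγ2⟩ := Hγ
  -- positivity of half-angle sines and cosines
  have hsa : 0 < Real.sin (α/2) := Real.sin_pos_of_pos_of_lt_pi (by linarith) (by linarith)
  have hca : 0 < Real.cos (α/2) := Real.cos_pos_of_mem_Ioo ⟨by linarith, by linarith⟩
  have hsb : 0 < Real.sin (β/2) := Real.sin_pos_of_pos_of_lt_pi (by linarith) (by linarith)
  have hcb : 0 < Real.cos (β/2) := Real.cos_pos_of_mem_Ioo ⟨by linarith, by linarith⟩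
  have hsc : 0 < Real.sin (γ/2) := Real.sin_pos_of_pos_of_lt_pi (by linarith) (by linarith)
  have hcc : 0 < Real.cos (γ/2) := Real.cos_pos_of_mem_Ioo ⟨by linarith, by linarith⟩
  -- positivity of sines of sides etc.
  have s1 : 0 < Real.sin (2*(u+v)) := Real.sin_pos_of_pos_of_lt_pi (by linarith) (by linarith)
  have s2 : 0 < Real.sin (2*(v+w)) := Real.sin_pos_of_pos_of_lt_pi (by linarith) (by linarith)
  have s3 : 0 < Real.sin (2*(u+w)) := Real.sin_pos_of_pos_of_lt_pi (by linarith) (by linarith)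
  have su : 0 < Real.sin (2*u) := Real.sin_pos_of_pos_of_lt_pi (by linarith) (by linarith)
  have sv : 0 < Real.sin (2*v) := Real.sin_pos_of_pos_of_lt_pi (by linarith) (by linarith)
  have sw : 0 < Real.sin (2*w) := Real.sin_pos_of_pos_of_lt_pi (by linarith) (by linarith)
  have sS : 0 < Real.sin (2*(u+v+w)) := Real.sin_pos_of_pos_of_lt_pi (by linarith) (by linarith)
  have hD : 0 < Real.sin (2*(u+v)) * Real.sin (2*(v+w)) * Real.sin (2*(u+w)) :=
    mul_pos (mul_pos s1 s2) s3
  -- the four triple products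
  have hT1 : Real.sin (β/2) * Real.cos (γ/2) * Real.cos (α/2)
      = Real.sin (2*(u+v+w)) * Real.sin (2*v) * Real.sin (2*w)
        / (Real.sin (2*(u+v)) * Real.sin (2*(v+w)) * Real.sin (2*(u+w))) := by
    have key : (Real.sin (β/2) * Real.cos (γ/2) * Real.cos (α/2))^2
        = (Real.sin (2*(u+v+w)) * Real.sin (2*v) * Real.sin (2*w)
        / (Real.sin (2*(u+v)) * Real.sin (2*(v+w)) * Real.sin (2*(u+w))))^2 := by
      rw [mul_pow, mul_pow, hsβ2, hcγ2, hcα2]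
      field_simp
    calc Real.sin (β/2) * Real.cos (γ/2) * Real.cos (α/2)
        = Real.sqrt ((Real.sin (β/2) * Real.cos (γ/2) * Real.cos (α/2))^2) :=
          (Real.sqrt_sq (mul_nonneg (mul_nonneg hsb.le hcc.le) hca.le)).symm
      _ = _ := by
          rw [key]
          exact Real.sqrt_sq (div_nonneg (mul_nonneg (mul_nonneg sS.le sv.le) sw.le) hD.le)
  have hT2 : Real.cos (β/2) * Real.sin (γ/2) * Real.cos (α/2)
      = Real.sin (2*(u+v+w)) * Real.sin (2*u) * Real.sin (2*w)
        / (Real.sin (2*(u+v)) * Real.sin (2*(v+w)) * Real.sin (2*(u+w))) := by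
    have key : (Real.cos (β/2) * Real.sin (γ/2) * Real.cos (α/2))^2
        = (Real.sin (2*(u+v+w)) * Real.sin (2*u) * Real.sin (2*w)
        / (Real.sin (2*(u+v)) * Real.sin (2*(v+w)) * Real.sin (2*(u+w))))^2 := by
      rw [mul_pow, mul_pow, hcβ2, hsγ2, hcα2]
      field_simp
    calc Real.cos (β/2) * Real.sin (γ/2) * Real.cos (α/2)
        = Real.sqrt ((Real.cos (β/2) * Real.sin (γ/2) * Real.cos (α/2))^2) :=
          (Real.sqrt_sq (mul_nonneg (mul_nonneg hcb.le hsc.le) hca.le)).symm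
      _ = _ := by
          rw [key]
          exact Real.sqrt_sq (div_nonneg (mul_nonneg (mul_nonneg sS.le su.le) sw.le) hD.le)
  have hT3 : Real.cos (β/2) * Real.cos (γ/2) * Real.sin (α/2)
      = Real.sin (2*(u+v+w)) * Real.sin (2*u) * Real.sin (2*v)
        / (Real.sin (2*(u+v)) * Real.sin (2*(v+w)) * Real.sin (2*(u+w))) := by
    have key : (Real.cos (β/2) * Real.cos (γ/2) * Real.sin (α/2))^2
        = (Real.sin (2*(u+v+w)) * Real.sin (2*u) * Real.sin (2*v)
        / (Real.sin (2*(u+v)) * Real.sin (2*(v+w)) * Real.sin (2*(u+w))))^2 := by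
      rw [mul_pow, mul_pow, hcβ2, hcγ2, hsα2]
      field_simp
    calc Real.cos (β/2) * Real.cos (γ/2) * Real.sin (α/2)
        = Real.sqrt ((Real.cos (β/2) * Real.cos (γ/2) * Real.sin (α/2))^2) :=
          (Real.sqrt_sq (mul_nonneg (mul_nonneg hcb.le hcc.le) hsa.le)).symm
      _ = _ := by
          rw [key]
          exact Real.sqrt_sq (div_nonneg (mul_nonneg (mul_nonneg sS.le su.le) sv.le) hD.le)
  have hT4 : Real.sin (β/2) * Real.sin (γ/2) * Real.sin (α/2)
      = Real.sin (2*u) * Real.sin (2*v) * Real.sin (2*w)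
        / (Real.sin (2*(u+v)) * Real.sin (2*(v+w)) * Real.sin (2*(u+w))) := by
    have key : (Real.sin (β/2) * Real.sin (γ/2) * Real.sin (α/2))^2
        = (Real.sin (2*u) * Real.sin (2*v) * Real.sin (2*w)
        / (Real.sin (2*(u+v)) * Real.sin (2*(v+w)) * Real.sin (2*(u+w))))^2 := by
      rw [mul_pow, mul_pow, hsβ2, hsγ2, hsα2]
      field_simp
    calc Real.sin (β/2) * Real.sin (γ/2) * Real.sin (α/2)
        = Real.sqrt ((Real.sin (β/2) * Real.sin (γ/2) * Real.sin (α/2))^2) :=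
          (Real.sqrt_sq (mul_nonneg (mul_nonneg hsb.le hsc.le) hsa.le)).symm
      _ = _ := by
          rw [key]
          exact Real.sqrt_sq (div_nonneg (mul_nonneg (mul_nonneg su.le sv.le) sw.le) hD.le)
  -- the sine of ψ
  have hψexp : Real.sin ((β + γ - α)/2)
      = Real.sin (β/2) * Real.cos (γ/2) * Real.cos (α/2)
        + Real.cos (β/2) * Real.sin (γ/2) * Real.cos (α/2)
        - Real.cos (β/2) * Real.cos (γ/2) * Real.sin (α/2)
        + Real.sin (β/2) * Real.sin (γ/2) * Real.sin (α/2) := by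
    rw [show (β + γ - α)/2 = (β/2 + γ/2) - α/2 from by ring, Real.sin_sub, Real.sin_add,
      Real.cos_add]
    ring
  have hsum : Real.sin ((β + γ - α)/2)
      = (Real.sin (2*(u+v+w)) * Real.sin (2*w) * Real.sin (2*u)
        + Real.sin (2*(u+v+w)) * Real.sin (2*w) * Real.sin (2*v)
        - Real.sin (2*(u+v+w)) * Real.sin (2*u) * Real.sin (2*v)
        + Real.sin (2*w) * Real.sin (2*u) * Real.sin (2*v))
        / (Real.sin (2*(u+v)) * Real.sin (2*(v+w)) * Real.sin (2*(u+w))) := by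
    rw [hψexp, hT1, hT2, hT3, hT4]
    field_simp
    ring
  -- closed forms for 1 ∓ sin ψ
  have h1m : 1 - Real.sin ((β + γ - α)/2)
      = 16 * Real.sin (u+v) * Real.cos (v+w) * Real.cos (u+w) * Real.cos (u+v+w)
        * Real.cos w * Real.sin u * Real.sin v
        / (Real.sin (2*(u+v)) * Real.sin (2*(v+w)) * Real.sin (2*(u+w))) := by
    rw [hsum, ← E1 u v w]
    field_simp
  have h1p : 1 + Real.sin ((β + γ - α)/2)
      = 16 * Real.sin (u+v) * Real.cos (v+w) * Real.cos (u+w) * Real.sin (u+v+w)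
        * Real.sin w * Real.cos u * Real.cos v
        / (Real.sin (2*(u+v)) * Real.sin (2*(v+w)) * Real.sin (2*(u+w))) := by
    rw [hsum, ← E2 u v w]
    field_simp
  -- positivity of the closed-form numerators
  have p1 : 0 < Real.sin (u+v) := Real.sin_pos_of_pos_of_lt_pi (by linarith) (by linarith)
  have p2 : 0 < Real.cos (v+w) := Real.cos_pos_of_mem_Ioo ⟨by linarith, by linarith⟩
  have p3 : 0 < Real.cos (u+w) := Real.cos_pos_of_mem_Ioo ⟨by linarith, by linarith⟩
  have p4 : 0 < Real.cos (u+v+w) := Real.cos_pos_of_mem_Ioo ⟨by linarith, by linarith⟩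
  have p5 : 0 < Real.cos w := Real.cos_pos_of_mem_Ioo ⟨by linarith, by linarith⟩
  have p6 : 0 < Real.sin u := Real.sin_pos_of_pos_of_lt_pi (by linarith) (by linarith)
  have p7 : 0 < Real.sin v := Real.sin_pos_of_pos_of_lt_pi (by linarith) (by linarith)
  have p8 : 0 < Real.sin (u+v+w) := Real.sin_pos_of_pos_of_lt_pi (by linarith) (by linarith)
  have p9 : 0 < Real.sin w := Real.sin_pos_of_pos_of_lt_pi (by linarith) (by linarith)
  have p10 : 0 < Real.cos u := Real.cos_pos_of_mem_Ioo ⟨by linarith, by linarith⟩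
  have p11 : 0 < Real.cos v := Real.cos_pos_of_mem_Ioo ⟨by linarith, by linarith⟩
  constructor
  · rw [h1p]
    have : 0 < 16 * Real.sin (u+v) * Real.cos (v+w) * Real.cos (u+w) * Real.sin (u+v+w)
        * Real.sin w * Real.cos u * Real.cos v :=
      mul_pos (mul_pos (mul_pos (mul_pos (mul_pos (mul_pos (mul_pos
        (by norm_num : (0:ℝ) < 16) p1) p2) p3) p8) p9) p10) p11
    exact div_pos this hD
  · rw [h1m, h1p]
    rw [mul_div_assoc', mul_div_assoc', div_lt_div_iff₀ hD hD]
    have hft : (u+v+w)*w*Real.cos (u+v+w)*Real.cos w*Real.sin u*Real.sin v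
        < u*v*Real.sin (u+v+w)*Real.sin w*Real.cos u*Real.cos v := final_trig hu hv hw hS
    have hpos : 0 < 16 * Real.sin (u+v) * Real.cos (v+w) * Real.cos (u+w)
        * (Real.sin (2*(u+v)) * Real.sin (2*(v+w)) * Real.sin (2*(u+w))) :=
      mul_pos (mul_pos (mul_pos (mul_pos (by norm_num : (0:ℝ) < 16) p1) p2) p3) hD
    calc (u+v+w)*w*(16 * Real.sin (u+v) * Real.cos (v+w) * Real.cos (u+w) * Real.cos (u+v+w)
        * Real.cos w * Real.sin u * Real.sin v)
        * (Real.sin (2*(u+v)) * Real.sin (2*(v+w)) * Real.sin (2*(u+w)))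
        = (16 * Real.sin (u+v) * Real.cos (v+w) * Real.cos (u+w)
            * (Real.sin (2*(u+v)) * Real.sin (2*(v+w)) * Real.sin (2*(u+w))))
          * ((u+v+w)*w*Real.cos (u+v+w)*Real.cos w*Real.sin u*Real.sin v) := by ring
      _ < (16 * Real.sin (u+v) * Real.cos (v+w) * Real.cos (u+w)
            * (Real.sin (2*(u+v)) * Real.sin (2*(v+w)) * Real.sin (2*(u+w))))
          * (u*v*Real.sin (u+v+w)*Real.sin w*Real.cos u*Real.cos v) :=
          mul_lt_mul_of_pos_left hft hpos
      _ = u*v*(16 * Real.sin (u+v) * Real.cos (v+w) * Real.cos (u+w) * Real.sin (u+v+w)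
            * Real.sin w * Real.cos u * Real.cos v)
          * (Real.sin (2*(u+v)) * Real.sin (2*(v+w)) * Real.sin (2*(u+w))) := by ring

set_option maxHeartbeats 1600000 in
/-- **Lemma 1s** of Nazarov–Petrov (spherical–planar angle comparison): if `a`, `b`, `c` are
the side lengths of a nondegenerate spherical triangle with `a + b + c < 2π`, with spherical
angles `α, β, γ` and planar comparison angles `α', β', γ'`, then
`α − α' < (β − β') + (γ − γ')`. -/
theorem spherical_planar_angle_comparison (a b c : ℝ)
    (ha : 0 < a) (hb : 0 < b) (hc : 0 < c)
    (habc : a < b + c) (hbca : b < c + a) (hcab : c < a + b)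
    (hsum : a + b + c < 2 * π) :
    sphAngle a b c - planarAngle a b c <
      (sphAngle b c a - planarAngle b c a) + (sphAngle c a b - planarAngle c a b) := by
  have hπ := Real.pi_pos
  obtain ⟨u, v, w, hu, hv, hw, hA, hB, hC⟩ :
      ∃ u v w : ℝ, 0 < u ∧ 0 < v ∧ 0 < w ∧ a = 2*(u+v) ∧ b = 2*(v+w) ∧ c = 2*(u+w) :=
    ⟨(a+c-b)/4, (a+b-c)/4, (b+c-a)/4, by linarith, by linarith, by linarith,
      by ring, by ring, by ring⟩
  subst hA; subst hB; subst hC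
  have hS : u + v + w < π/2 := by linarith
  set α := sphAngle (2*(u+v)) (2*(v+w)) (2*(u+w)) with hαdef
  set β := sphAngle (2*(v+w)) (2*(u+w)) (2*(u+v)) with hβdef
  set γ := sphAngle (2*(u+w)) (2*(u+v)) (2*(v+w)) with hγdef
  set αp := planarAngle (2*(u+v)) (2*(v+w)) (2*(u+w)) with hαpdef
  set βp := planarAngle (2*(v+w)) (2*(u+w)) (2*(u+v)) with hβpdef
  set γp := planarAngle (2*(u+w)) (2*(u+v)) (2*(v+w)) with hγpdef
  -- planar angle sum
  have hps : αp + βp + γp = π := by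
    have h := planar_angle_sum (show (0:ℝ) < 2*(u+v) by linarith)
      (show (0:ℝ) < 2*(v+w) by linarith) (show (0:ℝ) < 2*(u+w) by linarith)
      (by linarith) (by linarith) (by linarith)
    rw [← hαpdef, ← hβpdef, ← hγpdef] at h
    exact h
  -- spherical angle ranges
  have Hα := sph_helper hu hv hw hS
  rw [← hαdef] at Hα
  obtain ⟨hα0, hαπ, -, -⟩ := Hα
  have Hβ := sph_helper hv hw hu (by linarith : v + w + u < π/2)
  rw [show w+u = u+w from by ring, show v+u = u+v from by ring,
    show v+w+u = u+v+w from by ring, ← hβdef] at Hβ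
  obtain ⟨hβ0, hβπ, -, -⟩ := Hβ
  have Hγ := sph_helper hw hu hv (by linarith : w + u + v < π/2)
  rw [show w+u = u+w from by ring, show w+v = v+w from by ring,
    show u+w+v = u+v+w from by ring, ← hγdef] at Hγ
  obtain ⟨hγ0, hγπ, -, -⟩ := Hγ
  -- the spherical key inequality
  have Hkey := sph_key hu hv hw hS
  rw [← hαdef, ← hβdef, ← hγdef] at Hkey
  obtain ⟨hpos1, hkey⟩ := Hkey
  -- planar αp facts
  set Qp : ℝ := ((2*(v+w)) ^ 2 + (2*(u+w)) ^ 2 - (2*(u+v)) ^ 2)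
      / (2 * (2*(v+w)) * (2*(u+w))) with hQpdef
  have hαpQ : αp = Real.arccos Qp := rfl
  have hQ1m : 1 - Qp = 2*(u*v) / ((v+w)*(u+w)) := by
    rw [hQpdef]; field_simp; ring
  have hQ1p : 1 + Qp = 2*((u+v+w)*w) / ((v+w)*(u+w)) := by
    rw [hQpdef]; field_simp; ring
  have hden : (0:ℝ) < (v+w)*(u+w) := by positivity
  have hf1 : (0:ℝ) < 2*(u*v) / ((v+w)*(u+w)) := by positivity
  have hf2 : (0:ℝ) < 2*((u+v+w)*w) / ((v+w)*(u+w)) := by positivity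
  have hQlt : Qp < 1 := by linarith
  have hQgt : -1 < Qp := by linarith
  have hαp0 : 0 < αp := by rw [hαpQ]; exact Real.arccos_pos.mpr hQlt
  have hcosαp : Real.cos αp = Qp := by rw [hαpQ]; exact Real.cos_arccos hQgt.le hQlt.le
  have hαpπ : αp < π := by
    rcases lt_or_eq_of_le (hαpQ ▸ Real.arccos_le_pi Qp) with h | h
    · exact h
    · exfalso; rw [h, Real.cos_pi] at hcosαp; linarith
  -- comparison
  have hcomp : π/2 - (β + γ - α)/2 < αp := by
    rcases le_or_gt (π/2) ((β + γ - α)/2) with h | h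
    · linarith
    · have hψlb : -(π/2) < (β + γ - α)/2 := by linarith
      have hθ0 : 0 < π/2 - (β + γ - α)/2 := by linarith
      have hθπ : π/2 - (β + γ - α)/2 < π := by linarith
      -- tan half-square of θ
      have hcθ2 : Real.cos ((π/2 - (β + γ - α)/2)/2) ^ 2
          = (1 + Real.sin ((β + γ - α)/2))/2 := by
        have h2 := Real.cos_sq ((π/2 - (β + γ - α)/2)/2)
        rw [show 2*((π/2 - (β + γ - α)/2)/2) = π/2 - (β + γ - α)/2 from by ring,
          Real.cos_pi_div_two_sub] at h2
        rw [h2]; ring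
      have hsθ2 : Real.sin ((π/2 - (β + γ - α)/2)/2) ^ 2
          = (1 - Real.sin ((β + γ - α)/2))/2 := by
        rw [Real.sin_sq, hcθ2]; ring
      -- tan half-square of αp
      have hcαp2 : Real.cos (αp/2) ^ 2 = (1 + Qp)/2 := by
        have h2 := Real.cos_sq (αp/2)
        rw [show 2*(αp/2) = αp from by ring, hcosαp] at h2
        rw [h2]; ring
      have hsαp2 : Real.sin (αp/2) ^ 2 = (1 - Qp)/2 := by
        rw [Real.sin_sq, hcαp2]; ring
      -- positivity of the cosines of half-angles
      have hcθpos : 0 < Real.cos ((π/2 - (β + γ - α)/2)/2) :=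
        Real.cos_pos_of_mem_Ioo ⟨by linarith, by linarith⟩
      have hcαppos : 0 < Real.cos (αp/2) :=
        Real.cos_pos_of_mem_Ioo ⟨by linarith, by linarith⟩
      have htθpos : 0 ≤ Real.tan ((π/2 - (β + γ - α)/2)/2) :=
        (Real.tan_pos_of_pos_of_lt_pi_div_two (by linarith) (by linarith)).le
      have htαppos : 0 ≤ Real.tan (αp/2) :=
        (Real.tan_pos_of_pos_of_lt_pi_div_two (by linarith) (by linarith)).le
      -- squares comparison
      have hSw : (0:ℝ) < (u+v+w)*w := by positivity
      have huv : (0:ℝ) < u*v := by positivity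
      have hsq : Real.tan ((π/2 - (β + γ - α)/2)/2) ^ 2 < Real.tan (αp/2) ^ 2 := by
        rw [Real.tan_eq_sin_div_cos, Real.tan_eq_sin_div_cos, div_pow, div_pow,
          hsθ2, hcθ2, hsαp2, hcαp2]
        rw [div_lt_div_iff₀ (by linarith : (0:ℝ) < (1 + Real.sin ((β + γ - α)/2))/2)
          (by linarith : (0:ℝ) < (1 + Qp)/2)]
        have e1 : 1 - Qp = 2*(u*v) / ((v+w)*(u+w)) := hQ1m
        -- cross-multiplied target
        have goal2 : (1 - Real.sin ((β + γ - α)/2)) * (1 + Qp)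
            < (1 - Qp) * (1 + Real.sin ((β + γ - α)/2)) := by
          rw [hQ1m, hQ1p]
          rw [show (1 - Real.sin ((β + γ - α)/2)) * (2*((u+v+w)*w) / ((v+w)*(u+w)))
              = (((u+v+w)*w) * (1 - Real.sin ((β + γ - α)/2))) * (2/((v+w)*(u+w)))
            from by ring,
            show (2*(u*v) / ((v+w)*(u+w))) * (1 + Real.sin ((β + γ - α)/2))
              = ((u*v) * (1 + Real.sin ((β + γ - α)/2))) * (2/((v+w)*(u+w)))
            from by ring]
          exact mul_lt_mul_of_pos_right hkey (by positivity)
        linarith only [goal2]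
      have htlt : Real.tan ((π/2 - (β + γ - α)/2)/2) < Real.tan (αp/2) :=
        lt_of_pow_lt_pow_left₀ 2 htαppos hsq
      have hhalf : (π/2 - (β + γ - α)/2)/2 < αp/2 := by
        have := (Real.strictMonoOn_tan.lt_iff_lt
          (⟨by linarith, by linarith⟩ : (π/2 - (β + γ - α)/2)/2 ∈ Set.Ioo (-(π/2)) (π/2))
          (⟨by linarith, by linarith⟩ : αp/2 ∈ Set.Ioo (-(π/2)) (π/2))).mp htlt
        exact this
      linarith
  linarith
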